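/- For an undirected graph on a finite vertex set V with quotient map q : V → V♭ onto its deflation, the map X ↦ q(X) is an isomorphism of self-dual lattices from the closed sets of the graph to the closed sets of the deflation: it is an inclusion-preserving bijection between closed sets whose inverse is inclusion-preserving, and it commutes with the duality maps, q(∇X) = ∇♭(q(X)) for closed X. -/

import Mathlib

/-- The dual of a subset `X` of the vertex set: all vertices adjacent to every element of `X`. -/
def dual {V : Type*} (Adj : V → V → Prop) (X : Set V) : Set V := {y | ∀ x ∈ X, Adj x y}

/-- A subset is closed if it equals its double dual. -/
def Closed {V : Type*} (Adj : V → V → Prop) (X : Set V) : Prop := dual Adj (dual Adj X) = X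

/-- The neighborhood of a vertex. -/
def nbhd {V : Type*} (Adj : V → V → Prop) (x : V) : Set V := {y | Adj x y}

/-- Equilocality (equality of neighborhoods) as a setoid on the vertex set. -/
def equiSetoid {V : Type*} (Adj : V → V → Prop) : Setoid V :=
  ⟨fun x y => nbhd Adj x = nbhd Adj y,
   ⟨fun _ => rfl, fun h => h.symm, fun h₁ h₂ => h₁.trans h₂⟩⟩

section Aux

variable {V : Type*} {Adj : V → V → Prop}

lemma mem_dual_iff_sub (hs : Symmetric Adj) (X : Set V) (y : V) :
    y ∈ dual Adj X ↔ X ⊆ nbhd Adj y := by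
  constructor
  · intro h x hx; exact hs (h x hx)
  · intro h x hx; exact hs (h hx)

lemma subset_ddual (hs : Symmetric Adj) (X : Set V) : X ⊆ dual Adj (dual Adj X) := by
  intro x hx y hy; exact hs (hy x hx)

lemma dual_antitone {X Y : Set V} (h : X ⊆ Y) : dual Adj Y ⊆ dual Adj X :=
  fun y hy x hx => hy x (h hx)

lemma dual_closed (hs : Symmetric Adj) (X : Set V) : Closed Adj (dual Adj X) := by
  apply Set.Subset.antisymm
  · exact dual_antitone (subset_ddual hs X)
  · exact subset_ddual hs (dual Adj X)

end Aux

theorem stmt_10 {V : Type*} [Fintype V] (Adj : V → V → Prop) (hs : Symmetric Adj)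
    (AdjQ : Quotient (equiSetoid Adj) → Quotient (equiSetoid Adj) → Prop)
    (hQ : ∀ x y : V,
      AdjQ (Quotient.mk (equiSetoid Adj) x) (Quotient.mk (equiSetoid Adj) y) ↔ Adj x y) :
    (∀ X : Set V, Closed Adj X → Closed AdjQ (Quotient.mk (equiSetoid Adj) '' X)) ∧
    (∀ X Y : Set V, Closed Adj X → Closed Adj Y →
      (X ⊆ Y ↔ Quotient.mk (equiSetoid Adj) '' X ⊆ Quotient.mk (equiSetoid Adj) '' Y)) ∧
    (∀ S : Set (Quotient (equiSetoid Adj)), Closed AdjQ S →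
      ∃ X : Set V, Closed Adj X ∧ Quotient.mk (equiSetoid Adj) '' X = S) ∧
    (∀ X : Set V, Closed Adj X →
      Quotient.mk (equiSetoid Adj) '' dual Adj X
        = dual AdjQ (Quotient.mk (equiSetoid Adj) '' X)) := by
  set q := Quotient.mk (equiSetoid Adj) with hq
  -- key commuting lemma, for all X
  have key : ∀ X : Set V, q '' dual Adj X = dual AdjQ (q '' X) := by
    intro X
    ext s
    obtain ⟨y, rfl⟩ := Quotient.exists_rep s
    constructor
    · rintro ⟨z, hz, hzy⟩ t ⟨x, hx, rfl⟩
      have hnz : nbhd Adj z = nbhd Adj y := Quotient.exact hzy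
      have : Adj x z := hz x hx
      have : z ∈ nbhd Adj x := this
      have hAxy : Adj x y := by
        have : x ∈ nbhd Adj z := hs ‹Adj x z›
        rw [hnz] at this
        exact hs this
      exact (hQ x y).mpr hAxy
    · intro h
      refine ⟨y, ?_, rfl⟩
      intro x hx
      exact (hQ x y).mp (h (q x) ⟨x, hx, rfl⟩)
  refine ⟨?_, ?_, ?_, ?_⟩
  · intro X hX
    unfold Closed
    rw [← key X, ← key (dual Adj X), hX]
  · intro X Y hX hY
    constructor
    · intro h; exact Set.image_mono h
    · intro h x hx
      obtain ⟨y, hyY, hyx⟩ := h ⟨x, hx, rfl⟩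
      have hn : nbhd Adj y = nbhd Adj x := Quotient.exact hyx
      rw [← hY]
      rw [← hY] at hyY
      rw [mem_dual_iff_sub hs (dual Adj Y) y] at hyY
      rw [mem_dual_iff_sub hs (dual Adj Y) x]
      rwa [← hn]
  · intro S hS
    have hsurj : Function.Surjective q := fun s => Quotient.exists_rep s
    refine ⟨dual Adj (dual Adj (q ⁻¹' S)), dual_closed hs _, ?_⟩
    rw [key, key, Set.image_preimage_eq S hsurj]
    exact hS
  · intro X _
    exact key X
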